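/- For all λ > 0, μ > 0, all 0 < s < t, and every integer n ≥ 0, the probability mass function of the iterated Poisson process satisfies the Chapman–Kolmogorov convolution identity p_n(t) = Σ_{j=0}^n p_j(s) · p_{n-j}(t - s). -/

import Mathlib

open scoped BigOperators
open Filter MeasureTheory

/-- Bell polynomial: `B n x = e^{-x} * Σ_{k=0}^∞ k^n x^k / k!` (n-th moment of Poisson(x)). -/
noncomputable def bell (n : ℕ) (x : ℝ) : ℝ :=
  Real.exp (-x) * ∑' k : ℕ, (k : ℝ) ^ n * x ^ k / (Nat.factorial k : ℝ)

/-- pmf of the iterated Poisson process: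
`p_m(t) = e^{-λt(1-e^{-μ})} (μ^m/m!) B_m(λ t e^{-μ})`. -/
noncomputable def iterP (lam mu t : ℝ) (m : ℕ) : ℝ :=
  Real.exp (-lam * t * (1 - Real.exp (-mu))) * (mu ^ m / (Nat.factorial m : ℝ)) *
    bell m (lam * t * Real.exp (-mu))

lemma summable_bell (n : ℕ) (x : ℝ) :
    Summable (fun k : ℕ => (k : ℝ) ^ n * x ^ k / (Nat.factorial k : ℝ)) := by
  have h2 : Summable (fun k : ℕ => (k : ℝ) ^ n * (1 / 2 : ℝ) ^ k) :=
    summable_pow_mul_geometric_of_norm_lt_one n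
      (by rw [Real.norm_eq_abs, abs_of_nonneg (by norm_num : (0:ℝ) ≤ 1/2)]; norm_num)
  obtain ⟨C, hC⟩ := h2.tendsto_atTop_zero.bddAbove_range
  refine Summable.of_norm_bounded ((Real.summable_pow_div_factorial (2 * |x|)).mul_left C)
    fun k => ?_
  have habs : ‖(k : ℝ) ^ n * x ^ k / (Nat.factorial k : ℝ)‖
      = (k : ℝ) ^ n * |x| ^ k / (Nat.factorial k : ℝ) := by
    rw [Real.norm_eq_abs, abs_div, abs_mul, abs_pow, abs_pow, Nat.abs_cast, Nat.abs_cast]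
  rw [habs]
  have heq : (k : ℝ) ^ n * |x| ^ k / (Nat.factorial k : ℝ)
      = ((k : ℝ) ^ n * (1 / 2 : ℝ) ^ k) * ((2 * |x|) ^ k / (Nat.factorial k : ℝ)) := by
    have hpow : ((1 / 2 : ℝ)) ^ k * 2 ^ k = 1 := by rw [← mul_pow]; norm_num
    rw [mul_pow]
    linear_combination (-((k : ℝ) ^ n * |x| ^ k / (Nat.factorial k : ℝ))) * hpow
  rw [heq]
  have h1 : (k : ℝ) ^ n * (1 / 2 : ℝ) ^ k ≤ C := hC ⟨k, rfl⟩
  have h0 : (0 : ℝ) ≤ (2 * |x|) ^ k / (Nat.factorial k : ℝ) := by positivity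
  exact mul_le_mul_of_nonneg_right h1 h0

lemma summable_bell_norm (n : ℕ) (x : ℝ) :
    Summable (fun k : ℕ => ‖(k : ℝ) ^ n * x ^ k / (Nat.factorial k : ℝ)‖) := by
  refine (summable_bell n |x|).congr fun k => ?_
  rw [Real.norm_eq_abs, abs_div, abs_mul, abs_pow, abs_pow, Nat.abs_cast, Nat.abs_cast]

/-- The inner (x+y)^m/m! identity on the antidiagonal. -/
lemma antidiag_sum (m : ℕ) (x y : ℝ) :
    ∑ kl ∈ Finset.HasAntidiagonal.antidiagonal m,
      x ^ kl.1 / (Nat.factorial kl.1 : ℝ) * (y ^ kl.2 / (Nat.factorial kl.2 : ℝ))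
      = (x + y) ^ m / (Nat.factorial m : ℝ) := by
  rw [add_pow, Finset.sum_div, Finset.Nat.sum_antidiagonal_eq_sum_range_succ_mk]
  refine Finset.sum_congr rfl fun i hi => ?_
  have hile : i ≤ m := Nat.lt_succ_iff.mp (Finset.mem_range.mp hi)
  rw [Nat.cast_choose ℝ hile]
  have h1 : (Nat.factorial i : ℝ) ≠ 0 := Nat.cast_ne_zero.mpr (Nat.factorial_ne_zero i)
  have h2 : (Nat.factorial (m - i) : ℝ) ≠ 0 := Nat.cast_ne_zero.mpr (Nat.factorial_ne_zero _)
  have h3 : (Nat.factorial m : ℝ) ≠ 0 := Nat.cast_ne_zero.mpr (Nat.factorial_ne_zero m)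
  field_simp

/-- The finite double-sum computation at each `m`. -/
lemma inner_key (n m : ℕ) (x y : ℝ) :
    ∑ j ∈ Finset.range (n + 1), (n.choose j : ℝ) *
      ∑ kl ∈ Finset.HasAntidiagonal.antidiagonal m,
        ((kl.1 : ℝ) ^ j * x ^ kl.1 / (Nat.factorial kl.1 : ℝ)) *
        ((kl.2 : ℝ) ^ (n - j) * y ^ kl.2 / (Nat.factorial kl.2 : ℝ))
    = (m : ℝ) ^ n * (x + y) ^ m / (Nat.factorial m : ℝ) := by
  calc ∑ j ∈ Finset.range (n + 1), (n.choose j : ℝ) *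
      ∑ kl ∈ Finset.HasAntidiagonal.antidiagonal m,
        ((kl.1 : ℝ) ^ j * x ^ kl.1 / (Nat.factorial kl.1 : ℝ)) *
        ((kl.2 : ℝ) ^ (n - j) * y ^ kl.2 / (Nat.factorial kl.2 : ℝ))
      = ∑ j ∈ Finset.range (n + 1), ∑ kl ∈ Finset.HasAntidiagonal.antidiagonal m, (n.choose j : ℝ) *
        (((kl.1 : ℝ) ^ j * x ^ kl.1 / (Nat.factorial kl.1 : ℝ)) *
         ((kl.2 : ℝ) ^ (n - j) * y ^ kl.2 / (Nat.factorial kl.2 : ℝ))) := by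
        simp [Finset.mul_sum]
    _ = ∑ kl ∈ Finset.HasAntidiagonal.antidiagonal m, ∑ j ∈ Finset.range (n + 1), (n.choose j : ℝ) *
        (((kl.1 : ℝ) ^ j * x ^ kl.1 / (Nat.factorial kl.1 : ℝ)) *
         ((kl.2 : ℝ) ^ (n - j) * y ^ kl.2 / (Nat.factorial kl.2 : ℝ))) := Finset.sum_comm
    _ = ∑ kl ∈ Finset.HasAntidiagonal.antidiagonal m,
          (x ^ kl.1 / (Nat.factorial kl.1 : ℝ) * (y ^ kl.2 / (Nat.factorial kl.2 : ℝ))) *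
          (m : ℝ) ^ n := by
        refine Finset.sum_congr rfl fun kl hkl => ?_
        have hm : kl.1 + kl.2 = m := Finset.HasAntidiagonal.mem_antidiagonal.mp hkl
        have h1 : ∑ j ∈ Finset.range (n + 1), (n.choose j : ℝ) *
            (((kl.1 : ℝ) ^ j * x ^ kl.1 / (Nat.factorial kl.1 : ℝ)) *
             ((kl.2 : ℝ) ^ (n - j) * y ^ kl.2 / (Nat.factorial kl.2 : ℝ)))
            = (x ^ kl.1 / (Nat.factorial kl.1 : ℝ) * (y ^ kl.2 / (Nat.factorial kl.2 : ℝ))) *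
              ∑ j ∈ Finset.range (n + 1),
                (kl.1 : ℝ) ^ j * (kl.2 : ℝ) ^ (n - j) * (n.choose j : ℝ) := by
          rw [Finset.mul_sum]
          exact Finset.sum_congr rfl fun j _ => by ring
        rw [h1, ← add_pow, ← Nat.cast_add, hm]
    _ = (m : ℝ) ^ n * (x + y) ^ m / (Nat.factorial m : ℝ) := by
        rw [← Finset.sum_mul, antidiag_sum]
        ring

/-- Binomial convolution identity for Bell polynomials. -/
lemma bell_add (n : ℕ) (x y : ℝ) :
    bell n (x + y) = ∑ j ∈ Finset.range (n + 1),
      (n.choose j : ℝ) * bell j x * bell (n - j) y := by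
  unfold bell
  have hprod : ∀ j : ℕ,
      (∑' k : ℕ, (k : ℝ) ^ j * x ^ k / (Nat.factorial k : ℝ)) *
      (∑' k : ℕ, (k : ℝ) ^ (n - j) * y ^ k / (Nat.factorial k : ℝ))
      = ∑' m : ℕ, ∑ kl ∈ Finset.HasAntidiagonal.antidiagonal m,
          ((kl.1 : ℝ) ^ j * x ^ kl.1 / (Nat.factorial kl.1 : ℝ)) *
          ((kl.2 : ℝ) ^ (n - j) * y ^ kl.2 / (Nat.factorial kl.2 : ℝ)) := fun j =>
    tsum_mul_tsum_eq_tsum_sum_antidiagonal_of_summable_norm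
      (summable_bell_norm j x) (summable_bell_norm (n - j) y)
  have hsumm : ∀ j : ℕ, Summable (fun m : ℕ => ∑ kl ∈ Finset.HasAntidiagonal.antidiagonal m,
      ((kl.1 : ℝ) ^ j * x ^ kl.1 / (Nat.factorial kl.1 : ℝ)) *
      ((kl.2 : ℝ) ^ (n - j) * y ^ kl.2 / (Nat.factorial kl.2 : ℝ))) := fun j =>
    (summable_norm_sum_mul_antidiagonal_of_summable_norm
      (summable_bell_norm j x) (summable_bell_norm (n - j) y)).of_norm
  calc Real.exp (-(x + y)) * ∑' k : ℕ, (k : ℝ) ^ n * (x + y) ^ k / (Nat.factorial k : ℝ)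
      = Real.exp (-(x + y)) * ∑ j ∈ Finset.range (n + 1), (n.choose j : ℝ) *
          ((∑' k : ℕ, (k : ℝ) ^ j * x ^ k / (Nat.factorial k : ℝ)) *
           (∑' k : ℕ, (k : ℝ) ^ (n - j) * y ^ k / (Nat.factorial k : ℝ))) := by
        congr 1
        have step1 : ∑ j ∈ Finset.range (n + 1), (n.choose j : ℝ) *
            ((∑' k : ℕ, (k : ℝ) ^ j * x ^ k / (Nat.factorial k : ℝ)) *
             (∑' k : ℕ, (k : ℝ) ^ (n - j) * y ^ k / (Nat.factorial k : ℝ)))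
            = ∑ j ∈ Finset.range (n + 1), (n.choose j : ℝ) *
              ∑' m : ℕ, ∑ kl ∈ Finset.HasAntidiagonal.antidiagonal m,
                ((kl.1 : ℝ) ^ j * x ^ kl.1 / (Nat.factorial kl.1 : ℝ)) *
                ((kl.2 : ℝ) ^ (n - j) * y ^ kl.2 / (Nat.factorial kl.2 : ℝ)) :=
          Finset.sum_congr rfl fun j _ => by rw [hprod j]
        rw [step1]
        simp_rw [← tsum_mul_left]
        rw [← Summable.tsum_finsetSum (fun j _ => ((hsumm j).mul_left _))]
        exact tsum_congr fun m => (inner_key n m x y).symm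
      _ = _ := by
        rw [Finset.mul_sum]
        refine Finset.sum_congr rfl fun j _ => ?_
        rw [Real.exp_neg, Real.exp_add, Real.exp_neg, Real.exp_neg]
        ring

/-- Chapman–Kolmogorov convolution identity
`p_n(t) = Σ_{j=0}^n p_j(s) p_{n-j}(t-s)` for `0 < s < t`. -/
theorem stmt4 (lam mu : ℝ) (hlam : 0 < lam) (hmu : 0 < mu)
    (s t : ℝ) (hs : 0 < s) (hst : s < t) (n : ℕ) :
    iterP lam mu t n = ∑ j ∈ Finset.range (n + 1), iterP lam mu s j * iterP lam mu (t - s) (n - j) := by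
  unfold iterP
  have hX : lam * t * Real.exp (-mu)
      = lam * s * Real.exp (-mu) + lam * (t - s) * Real.exp (-mu) := by ring
  rw [hX, bell_add]
  rw [Finset.mul_sum]
  refine Finset.sum_congr rfl fun j hj => ?_
  have hjle : j ≤ n := Nat.lt_succ_iff.mp (Finset.mem_range.mp hj)
  have hexp : Real.exp (-lam * t * (1 - Real.exp (-mu)))
      = Real.exp (-lam * s * (1 - Real.exp (-mu))) *
        Real.exp (-lam * (t - s) * (1 - Real.exp (-mu))) := by
    rw [← Real.exp_add]; ring_nf
  rw [hexp, Nat.cast_choose ℝ hjle]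
  have hmun : mu ^ n = mu ^ j * mu ^ (n - j) := by
    rw [← pow_add, Nat.add_sub_cancel' hjle]
  rw [hmun]
  have h1 : (Nat.factorial j : ℝ) ≠ 0 := Nat.cast_ne_zero.mpr (Nat.factorial_ne_zero j)
  have h2 : (Nat.factorial (n - j) : ℝ) ≠ 0 := Nat.cast_ne_zero.mpr (Nat.factorial_ne_zero _)
  have h3 : (Nat.factorial n : ℝ) ≠ 0 := Nat.cast_ne_zero.mpr (Nat.factorial_ne_zero n)
  field_simp
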